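/- Let n ∈ ℕ, let Y be a complex Banach space, let h ∈ L¹(ℝⁿ) (complex-valued), let ∅ ≠ I' ⊆ ℝⁿ be unbounded, let c ∈ ℂ ∖ {0}, and let F : ℝⁿ → Y be a bounded continuous function. Then the convolution (h∗F)(t) := ∫_{ℝⁿ} h(σ)·F(t−σ) dσ is a well-defined bounded continuous function from ℝⁿ to Y; if F is quasi-asymptotically (I',c)-almost periodic, then h∗F is quasi-asymptotically (I',c)-almost periodic; if F is quasi-asymptotically (I',c)-uniformly recurrent, then h∗F is quasi-asymptotically (I',c)-uniformly recurrent; and if F is in addition uniformly continuous, then h∗F is uniformly continuous. -/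

import Mathlib

open Filter MeasureTheory

/-- `F` is quasi-asymptotically `(I',c)`-almost periodic. -/
def QuasiAsympAPv {n : ℕ} {Y : Type*} [NormedAddCommGroup Y] [NormedSpace ℂ Y]
    (I' : Set (EuclideanSpace ℝ (Fin n))) (c : ℂ)
    (F : EuclideanSpace ℝ (Fin n) → Y) : Prop :=
  ∀ ε > (0 : ℝ), ∃ l > (0 : ℝ), ∀ t₀ ∈ I', ∃ τ ∈ I', ‖τ - t₀‖ ≤ l ∧
    ∃ M > (0 : ℝ), ∀ t : EuclideanSpace ℝ (Fin n),
      M ≤ ‖t‖ → M ≤ ‖t + τ‖ → ‖F (t + τ) - c • F t‖ ≤ ε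

/-- `F` is quasi-asymptotically `(I',c)`-uniformly recurrent. -/
def QuasiAsympURv {n : ℕ} {Y : Type*} [NormedAddCommGroup Y] [NormedSpace ℂ Y]
    (I' : Set (EuclideanSpace ℝ (Fin n))) (c : ℂ)
    (F : EuclideanSpace ℝ (Fin n) → Y) : Prop :=
  ∃ τ : ℕ → EuclideanSpace ℝ (Fin n), ∃ M : ℕ → ℝ,
    (∀ k, τ k ∈ I') ∧ (∀ k, 0 < M k) ∧
    Tendsto (fun k => ‖τ k‖) atTop atTop ∧ Tendsto M atTop atTop ∧
    ∀ ε > (0 : ℝ), ∃ K : ℕ, ∀ k ≥ K, ∀ t : EuclideanSpace ℝ (Fin n),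
      M k ≤ ‖t‖ → M k ≤ ‖t + τ k‖ → ‖F (t + τ k) - c • F t‖ ≤ ε

section Aux

variable {n : ℕ} {Y : Type*} [NormedAddCommGroup Y] [NormedSpace ℂ Y] [CompleteSpace Y]

local notation "E" => EuclideanSpace ℝ (Fin n)

lemma bound_half {B ε : ℝ} (hB : 0 ≤ B) (hε : 0 < ε) :
    ε / (2 * (B + 1)) * B ≤ ε / 2 := by
  rw [div_mul_eq_mul_div, div_le_div_iff₀ (by linarith) two_pos]
  nlinarith

lemma conv_integrable (h : E → ℂ) (hh : Integrable h)
    (F : E → Y) (hFcont : Continuous F) {C : ℝ} (hC : ∀ t, ‖F t‖ ≤ C) (t : E) :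
    Integrable fun σ => h σ • F (t - σ) := by
  refine (hh.norm.mul_const C).mono'
    (hh.aestronglyMeasurable.smul
      ((hFcont.comp (continuous_const.sub continuous_id)).aestronglyMeasurable)) ?_
  filter_upwards with σ
  rw [norm_smul]
  exact mul_le_mul_of_nonneg_left (hC _) (norm_nonneg _)

lemma mul_integrable (h : E → ℂ) (hh : Integrable h)
    (g : E → ℝ) (hg : Continuous g) {B : ℝ} (hB : ∀ σ, |g σ| ≤ B) :
    Integrable fun σ => ‖h σ‖ * g σ := by
  refine (hh.norm.mul_const B).mono'
    (hh.norm.aestronglyMeasurable.mul hg.aestronglyMeasurable) ?_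
  filter_upwards with σ
  rw [norm_mul, norm_norm, Real.norm_eq_abs]
  exact mul_le_mul_of_nonneg_left (hB σ) (norm_nonneg _)

lemma tail_small (h : E → ℂ) (hh : Integrable h) {δ : ℝ} (hδ : 0 < δ) :
    ∃ R > (0 : ℝ), ∫ σ in (Metric.closedBall (0 : E) R)ᶜ, ‖h σ‖ ≤ δ := by
  have hint : Integrable fun σ : E => ‖h σ‖ := hh.norm
  have hmono : Monotone fun k : ℕ => Metric.closedBall (0 : E) k := fun a b hab =>
    Metric.closedBall_subset_closedBall (by exact_mod_cast hab)
  have hunion : (⋃ k : ℕ, Metric.closedBall (0 : E) k) = Set.univ := by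
    ext x
    simp only [Set.mem_iUnion, Metric.mem_closedBall, dist_zero_right, Set.mem_univ, iff_true]
    obtain ⟨k, hk⟩ := exists_nat_ge ‖x‖
    exact ⟨k, hk⟩
  have htend := tendsto_setIntegral_of_monotone (fun k : ℕ => measurableSet_closedBall)
    hmono (f := fun σ => ‖h σ‖) (by rw [hunion]; exact hint.integrableOn)
  rw [hunion, setIntegral_univ] at htend
  obtain ⟨N, hN⟩ := (Metric.tendsto_atTop.mp htend) δ hδ
  set k : ℕ := max N 1
  have hk : dist (∫ σ in Metric.closedBall (0 : E) k, ‖h σ‖) (∫ σ, ‖h σ‖) < δ :=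
    hN k (le_max_left _ _)
  refine ⟨(k : ℝ), by exact_mod_cast Nat.lt_of_lt_of_le Nat.zero_lt_one (le_max_right N 1), ?_⟩
  have hsplit := integral_add_compl (measurableSet_closedBall
    (x := (0 : E)) (ε := (k : ℝ))) hint
  rw [Real.dist_eq, abs_sub_lt_iff] at hk
  linarith [hk.2]

lemma key_est (h : E → ℂ) (hh : Integrable h) (c : ℂ)
    (F : E → Y) (hFcont : Continuous F) {C : ℝ} (hC : ∀ t, ‖F t‖ ≤ C)
    {ε' R M δ₂ : ℝ} (hR : 0 ≤ R) (hε' : 0 ≤ ε')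
    (htail : ∫ σ in (Metric.closedBall (0 : E) R)ᶜ, ‖h σ‖ ≤ δ₂)
    {τ : E} (hF : ∀ t : E, M ≤ ‖t‖ → M ≤ ‖t + τ‖ → ‖F (t + τ) - c • F t‖ ≤ ε')
    (t : E) (ht : M + R ≤ ‖t‖) (htτ : M + R ≤ ‖t + τ‖) :
    ‖(∫ σ, h σ • F (t + τ - σ)) - c • ∫ σ, h σ • F (t - σ)‖ ≤
      (∫ σ, ‖h σ‖) * ε' + δ₂ * (C * (1 + ‖c‖)) := by
  have hC0 : 0 ≤ C := le_trans (norm_nonneg _) (hC 0)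
  set g : E → ℝ := fun σ => ‖F (t + τ - σ) - c • F (t - σ)‖ with hg_def
  have hgcont : Continuous g :=
    ((hFcont.comp (continuous_const.sub continuous_id)).sub
      ((hFcont.comp (continuous_const.sub continuous_id)).const_smul c)).norm
  have hgB : ∀ σ, |g σ| ≤ C * (1 + ‖c‖) := by
    intro σ
    rw [abs_of_nonneg (norm_nonneg _)]
    calc g σ ≤ ‖F (t + τ - σ)‖ + ‖c • F (t - σ)‖ := norm_sub_le _ _
      _ ≤ C + ‖c‖ * C := by
          rw [norm_smul]
          exact add_le_add (hC _) (mul_le_mul_of_nonneg_left (hC _) (norm_nonneg _))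
      _ = C * (1 + ‖c‖) := by ring
  have hgint : Integrable fun σ => ‖h σ‖ * g σ := mul_integrable h hh g hgcont hgB
  have h1 : Integrable fun σ => h σ • F (t + τ - σ) :=
    conv_integrable h hh F hFcont hC (t + τ)
  have h2 : Integrable fun σ => c • (h σ • F (t - σ)) :=
    (conv_integrable h hh F hFcont hC t).smul c
  have heq : (∫ σ, h σ • F (t + τ - σ)) - c • ∫ σ, h σ • F (t - σ)
      = ∫ σ, h σ • (F (t + τ - σ) - c • F (t - σ)) := by
    rw [← integral_smul, ← integral_sub h1 h2]
    congr 1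
    funext σ
    rw [smul_sub, smul_comm c (h σ)]
  rw [heq]
  have hbound : ‖∫ σ, h σ • (F (t + τ - σ) - c • F (t - σ))‖ ≤ ∫ σ, ‖h σ‖ * g σ := by
    refine norm_integral_le_of_norm_le hgint ?_
    filter_upwards with σ
    rw [norm_smul]
  refine hbound.trans ?_
  set B : Set E := Metric.closedBall (0 : E) R with hB_def
  have hBmeas : MeasurableSet B := measurableSet_closedBall
  rw [← integral_add_compl hBmeas hgint]
  have hpart1 : (∫ σ in B, ‖h σ‖ * g σ) ≤ (∫ σ, ‖h σ‖) * ε' := by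
    have step1 : (∫ σ in B, ‖h σ‖ * g σ) ≤ ∫ σ in B, ‖h σ‖ * ε' := by
      refine setIntegral_mono_on hgint.integrableOn
        ((hh.norm.mul_const ε').integrableOn) hBmeas ?_
      intro σ hσ
      have hσR : ‖σ‖ ≤ R := by simpa [hB_def, dist_zero_right] using hσ
      refine mul_le_mul_of_nonneg_left ?_ (norm_nonneg _)
      have h1' : M ≤ ‖t - σ‖ := by
        have := norm_sub_norm_le t σ
        have hts : ‖t‖ - ‖σ‖ ≤ ‖t - σ‖ := norm_sub_norm_le t σ
        linarith
      have h2' : M ≤ ‖t - σ + τ‖ := by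
        have : t - σ + τ = (t + τ) - σ := by abel
        rw [this]
        have hts : ‖t + τ‖ - ‖σ‖ ≤ ‖(t + τ) - σ‖ := norm_sub_norm_le _ _
        linarith
      have := hF (t - σ) h1' h2'
      have heq2 : t - σ + τ = t + τ - σ := by abel
      rw [heq2] at this
      exact this
    refine step1.trans ?_
    rw [integral_mul_const]
    exact mul_le_mul_of_nonneg_right (setIntegral_le_integral hh.norm
      (Filter.Eventually.of_forall fun σ => norm_nonneg _)) hε'
  have hpart2 : (∫ σ in Bᶜ, ‖h σ‖ * g σ) ≤ δ₂ * (C * (1 + ‖c‖)) := by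
    have step1 : (∫ σ in Bᶜ, ‖h σ‖ * g σ) ≤ ∫ σ in Bᶜ, ‖h σ‖ * (C * (1 + ‖c‖)) := by
      refine setIntegral_mono_on hgint.integrableOn
        ((hh.norm.mul_const _).integrableOn) hBmeas.compl ?_
      intro σ _
      refine mul_le_mul_of_nonneg_left ?_ (norm_nonneg _)
      exact (le_abs_self _).trans (hgB σ)
    refine step1.trans ?_
    rw [integral_mul_const]
    refine mul_le_mul_of_nonneg_right htail ?_
    positivity
  linarith

end Aux

/-- **Lemma (milenko1).** Let `h ∈ L¹(ℝⁿ)`, `∅ ≠ I' ⊆ ℝⁿ` unbounded, `c ∈ ℂ \ {0}`, and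
`F : ℝⁿ → Y` bounded and continuous. Then `h∗F` is a well-defined bounded continuous
function; quasi-asymptotic `(I',c)`-almost periodicity and quasi-asymptotic
`(I',c)`-uniform recurrence of `F` transfer to `h∗F`; and uniform continuity of `F`
transfers to `h∗F`. -/
theorem stmt_17 {n : ℕ} {Y : Type*}
    [NormedAddCommGroup Y] [NormedSpace ℂ Y] [CompleteSpace Y]
    (h : EuclideanSpace ℝ (Fin n) → ℂ) (hh : Integrable h)
    (I' : Set (EuclideanSpace ℝ (Fin n)))
    (hI'ne : I'.Nonempty) (hI'unb : ¬ Bornology.IsBounded I')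
    (c : ℂ) (hc : c ≠ 0)
    (F : EuclideanSpace ℝ (Fin n) → Y)
    (hFcont : Continuous F) (hFbdd : ∃ C : ℝ, ∀ t, ‖F t‖ ≤ C) :
    (∀ t, Integrable fun σ => h σ • F (t - σ)) ∧
    Continuous (fun t => ∫ σ, h σ • F (t - σ)) ∧
    (∃ C : ℝ, ∀ t, ‖∫ σ, h σ • F (t - σ)‖ ≤ C) ∧
    (QuasiAsympAPv I' c F → QuasiAsympAPv I' c (fun t => ∫ σ, h σ • F (t - σ))) ∧
    (QuasiAsympURv I' c F → QuasiAsympURv I' c (fun t => ∫ σ, h σ • F (t - σ))) ∧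
    (UniformContinuous F → UniformContinuous (fun t => ∫ σ, h σ • F (t - σ))) := by
  obtain ⟨C, hC⟩ := hFbdd
  have hC0 : 0 ≤ C := le_trans (norm_nonneg _) (hC 0)
  have hInt : ∀ t, Integrable fun σ => h σ • F (t - σ) :=
    conv_integrable h hh F hFcont hC
  set A : ℝ := ∫ σ, ‖h σ‖ with hA_def
  have hA0 : 0 ≤ A := integral_nonneg fun σ => norm_nonneg _
  refine ⟨hInt, ?_, ?_, ?_, ?_, ?_⟩
  · -- Continuity
    rw [continuous_iff_continuousAt]
    intro t₀
    refine tendsto_integral_filter_of_dominated_convergence (fun σ => ‖h σ‖ * C) ?_ ?_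
      (hh.norm.mul_const C) ?_
    · filter_upwards with t
      exact (hInt t).aestronglyMeasurable
    · filter_upwards with t
      filter_upwards with σ
      rw [norm_smul]
      exact mul_le_mul_of_nonneg_left (hC _) (norm_nonneg _)
    · filter_upwards with σ
      exact (continuous_const.smul
        (hFcont.comp (continuous_id.sub continuous_const))).tendsto t₀
  · -- Boundedness
    refine ⟨A * C, fun t => ?_⟩
    calc ‖∫ σ, h σ • F (t - σ)‖ ≤ ∫ σ, ‖h σ‖ * C := by
          refine norm_integral_le_of_norm_le (hh.norm.mul_const C) ?_
          filter_upwards with σ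
          rw [norm_smul]
          exact mul_le_mul_of_nonneg_left (hC _) (norm_nonneg _)
      _ = A * C := by rw [hA_def, integral_mul_const]
  · -- AP transfer
    intro hAP ε hε
    set ε' : ℝ := ε / (2 * (A + 1)) with hε'_def
    have hε'pos : 0 < ε' := by positivity
    set δ₂ : ℝ := ε / (2 * (C * (1 + ‖c‖) + 1)) with hδ₂_def
    have hδ₂pos : 0 < δ₂ := by positivity
    obtain ⟨l, hl, hlp⟩ := hAP ε' hε'pos
    obtain ⟨R, hR, htail⟩ := tail_small h hh hδ₂pos
    refine ⟨l, hl, fun t₀ ht₀ => ?_⟩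
    obtain ⟨τ, hτI, hτl, M, hM, hMest⟩ := hlp t₀ ht₀
    refine ⟨τ, hτI, hτl, M + R, by linarith, fun t ht htτ => ?_⟩
    have hkey := key_est h hh c F hFcont hC hR.le hε'pos.le htail hMest t ht htτ
    refine hkey.trans ?_
    have h1 : A * ε' ≤ ε / 2 := by
      rw [hε'_def, mul_comm]; exact bound_half hA0 hε
    have h2 : δ₂ * (C * (1 + ‖c‖)) ≤ ε / 2 := by
      rw [hδ₂_def]; exact bound_half (by positivity) hε
    linarith
  · -- UR transfer
    intro hUR
    obtain ⟨τ, M, hτI, hM, hτtend, hMtend, hur⟩ := hUR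
    refine ⟨τ, fun k => M k + k, hτI, fun k => by have := hM k; positivity, hτtend, ?_, ?_⟩
    · exact Tendsto.atTop_add_atTop hMtend tendsto_natCast_atTop_atTop
    · intro ε hε
      set ε' : ℝ := ε / (2 * (A + 1)) with hε'_def
      have hε'pos : 0 < ε' := by positivity
      set δ₂ : ℝ := ε / (2 * (C * (1 + ‖c‖) + 1)) with hδ₂_def
      have hδ₂pos : 0 < δ₂ := by positivity
      obtain ⟨R, hR, htail⟩ := tail_small h hh hδ₂pos
      obtain ⟨K₀, hK₀⟩ := hur ε' hε'pos
      refine ⟨max K₀ ⌈R⌉₊, fun k hk t ht htτ => ?_⟩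
      have hRk : R ≤ (k : ℝ) := by
        refine (Nat.le_ceil R).trans ?_
        exact_mod_cast le_trans (le_max_right K₀ ⌈R⌉₊) hk
      have ht' : M k + (k : ℝ) ≤ ‖t‖ := ht
      have htτ' : M k + (k : ℝ) ≤ ‖t + τ k‖ := htτ
      have hkey := key_est h hh c F hFcont hC hR.le hε'pos.le htail
        (hK₀ k (le_trans (le_max_left _ _) hk)) t (by linarith) (by linarith)
      refine hkey.trans ?_
      have h1 : A * ε' ≤ ε / 2 := by
        rw [hε'_def, mul_comm]; exact bound_half hA0 hε
      have h2 : δ₂ * (C * (1 + ‖c‖)) ≤ ε / 2 := by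
        rw [hδ₂_def]; exact bound_half (by positivity) hε
      linarith
  · -- Uniform continuity
    intro hFU
    rw [Metric.uniformContinuous_iff]
    intro ε hε
    set ε' : ℝ := ε / (2 * (A + 1)) with hε'_def
    have hε'pos : 0 < ε' := by positivity
    obtain ⟨δ, hδ, hδp⟩ := Metric.uniformContinuous_iff.mp hFU ε' hε'pos
    refine ⟨δ, hδ, fun {s t} hst => ?_⟩
    rw [dist_eq_norm]
    have heq : (∫ σ, h σ • F (s - σ)) - (∫ σ, h σ • F (t - σ))
        = ∫ σ, h σ • (F (s - σ) - F (t - σ)) := by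
      rw [← integral_sub (hInt s) (hInt t)]
      congr 1
      funext σ
      rw [smul_sub]
    rw [heq]
    have hbound : ‖∫ σ, h σ • (F (s - σ) - F (t - σ))‖ ≤ ∫ σ, ‖h σ‖ * ε' := by
      refine norm_integral_le_of_norm_le (hh.norm.mul_const ε') ?_
      filter_upwards with σ
      rw [norm_smul]
      refine mul_le_mul_of_nonneg_left ?_ (norm_nonneg _)
      have : dist (s - σ) (t - σ) < δ := by
        rw [dist_eq_norm]
        have : s - σ - (t - σ) = s - t := by abel
        rw [this, ← dist_eq_norm]
        exact hst
      exact le_of_lt (by rw [← dist_eq_norm]; exact hδp this)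
    refine lt_of_le_of_lt (hbound.trans ?_) (show A * ε' < ε from ?_)
    · rw [integral_mul_const]
    · have h1 : A * ε' ≤ ε / 2 := by
        rw [hε'_def, mul_comm]; exact bound_half hA0 hε
      linarith
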